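/- Let G be a reflexive digraph admitting an Olšák polymorphism o, and let a, b, c, d be vertices of G with a → b, b → a, b → c, c → d, d → c, and d → a. Then a and c lie in the same D-component of G. -/
import Mathlib


namespace DigraphHM7

/-- `f` is a polymorphism of the digraph `(V, E)`. -/
def IsPoly {V : Type*} (E : V → V → Prop) {n : ℕ} (f : (Fin n → V) → V) : Prop :=
  ∀ a b : Fin n → V, (∀ i, E (a i) (b i)) → E (f a) (f b)

/-- `f` is idempotent. -/
def IsIdem {V : Type*} {n : ℕ} (f : (Fin n → V) → V) : Prop :=
  ∀ x : V, f (fun _ => x) = x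

/-- `o` is an Olšák operation: a 6-ary idempotent operation satisfying
`o(x,x,x,y,y,y) = o(x,y,y,x,x,y) = o(y,x,y,x,y,x)`. -/
def IsOlsak {V : Type*} (o : (Fin 6 → V) → V) : Prop :=
  IsIdem o ∧ ∀ x y : V,
    o ![x, x, x, y, y, y] = o ![x, y, y, x, x, y] ∧
    o ![x, y, y, x, x, y] = o ![y, x, y, x, y, x]

/-- `φ` is a digraph homomorphism from `(W, EH)` to `(V, EG)`. -/
def IsHom {W V : Type*} (EH : W → W → Prop) (EG : V → V → Prop) (φ : W → V) : Prop :=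
  ∀ u v : W, EH u v → EG (φ u) (φ v)

/-- The `H`-equivalence of `G`: the equivalence relation generated by the relation
holding between `g` and `g'` whenever they both lie in the range of a homomorphism
from `H` to `G`. -/
def HEqv {W V : Type*} (EH : W → W → Prop) (EG : V → V → Prop) : V → V → Prop :=
  Relation.EqvGen (fun g g' =>
    ∃ φ : W → V, IsHom EH EG φ ∧ (∃ u, φ u = g) ∧ (∃ v, φ v = g'))

/-- The reflexive digraph `D` on `{0,1,2}` with non-loop edges
`0 → 1`, `1 → 0`, `1 → 2`, `2 → 0`. -/
def DEdge : Fin 3 → Fin 3 → Prop := fun a b =>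
  a = b ∨ (a = 0 ∧ b = 1) ∨ (a = 1 ∧ b = 0) ∨ (a = 1 ∧ b = 2) ∨ (a = 2 ∧ b = 0)

private lemma poly6 {V : Type*} {E : V → V → Prop} {o : (Fin 6 → V) → V} (hpoly : IsPoly E o)
    {x0 x1 x2 x3 x4 x5 y0 y1 y2 y3 y4 y5 : V}
    (h0 : E x0 y0) (h1 : E x1 y1) (h2 : E x2 y2)
    (h3 : E x3 y3) (h4 : E x4 y4) (h5 : E x5 y5) :
    E (o ![x0, x1, x2, x3, x4, x5]) (o ![y0, y1, y2, y3, y4, y5]) :=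
  hpoly _ _ (fun i => by fin_cases i <;> assumption)

private lemma tri02 {V : Type*} {E : V → V → Prop} (hrefl : ∀ v, E v v) {x0 x1 x2 : V}
    (h01 : E x0 x1) (h10 : E x1 x0) (h12 : E x1 x2) (h20 : E x2 x0) :
    HEqv DEdge E x0 x2 := by
  refine Relation.EqvGen.rel _ _ ⟨![x0, x1, x2], ?_, ⟨0, rfl⟩, ⟨2, rfl⟩⟩
  rintro u v (rfl | ⟨rfl, rfl⟩ | ⟨rfl, rfl⟩ | ⟨rfl, rfl⟩ | ⟨rfl, rfl⟩)
  · exact hrefl _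
  · exact h01
  · exact h10
  · exact h12
  · exact h20

private lemma oconst {V : Type*} {o : (Fin 6 → V) → V} (hidem : IsIdem o) (x : V) :
    o ![x, x, x, x, x, x] = x := by
  have h : ![x, x, x, x, x, x] = (fun _ : Fin 6 => x) := by
    funext i; fin_cases i <;> rfl
  rw [h, hidem]

/-- If a reflexive digraph admits an Olšák polymorphism and `a, b, c, d` are vertices
with `a → b`, `b → a`, `b → c`, `c → d`, `d → c`, `d → a`, then `a` and `c` lie in the
same `D`-component. -/
theorem dEqv_of_olsak_of_KPattern {V : Type*} (E : V → V → Prop)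
    (hrefl : ∀ v, E v v) (o : (Fin 6 → V) → V)
    (hpoly : IsPoly E o) (holsak : IsOlsak o)
    (a b c d : V) (hab : E a b) (hba : E b a) (hbc : E b c)
    (hcd : E c d) (hdc : E d c) (hda : E d a) :
    HEqv DEdge E a c := by
  obtain ⟨hidem, hids⟩ := holsak
  -- Olšák identities we use to switch between representatives
  have ezba : o ![b, a, a, b, b, a] = o ![a, b, a, b, a, b] := (hids b a).2
  have esad : o ![a, d, d, a, a, d] = o ![a, a, a, d, d, d] := ((hids a d).1).symm
  have etbd : o ![b, d, d, b, b, d] = o ![b, b, b, d, d, d] := ((hids b d).1).symm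
  have ewdc : o ![d, d, d, c, c, c] = o ![c, d, c, d, c, d] := ((hids d c).1).trans (hids d c).2
  -- step 1 : a ~ z := o![a,b,a,b,a,b]   (triangle (z, a, a))
  have haz : E a (o ![a, b, a, b, a, b]) := by
    have h := poly6 hpoly (hrefl a) hab (hrefl a) hab (hrefl a) hab
    rwa [oconst hidem a] at h
  have hza : E (o ![a, b, a, b, a, b]) a := by
    have h := poly6 hpoly (hrefl a) hba (hrefl a) hba (hrefl a) hba
    rwa [oconst hidem a] at h
  have step1 : HEqv DEdge E a (o ![a, b, a, b, a, b]) :=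
    Relation.EqvGen.symm _ _ (tri02 hrefl hza haz (hrefl a) haz)
  -- step 2 : z ~ p := o![a,a,a,b,b,c]   (triangle (p, q, z)) with q := o![a,a,a,a,a,d]
  have hpq : E (o ![a, a, a, b, b, c]) (o ![a, a, a, a, a, d]) :=
    poly6 hpoly (hrefl a) (hrefl a) (hrefl a) hba hba hcd
  have hqp : E (o ![a, a, a, a, a, d]) (o ![a, a, a, b, b, c]) :=
    poly6 hpoly (hrefl a) (hrefl a) (hrefl a) hab hab hdc
  have hqz : E (o ![a, a, a, a, a, d]) (o ![a, b, a, b, a, b]) := by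
    have h := poly6 hpoly hab (hrefl a) (hrefl a) hab hab hda
    rwa [ezba] at h
  have hzp : E (o ![a, b, a, b, a, b]) (o ![a, a, a, b, b, c]) :=
    poly6 hpoly (hrefl a) hba (hrefl a) (hrefl b) hab hbc
  have step2 : HEqv DEdge E (o ![a, b, a, b, a, b]) (o ![a, a, a, b, b, c]) :=
    Relation.EqvGen.symm _ _ (tri02 hrefl hpq hqp hqz hzp)
  -- step 3 : p ~ r := o![a,a,a,c,c,d]   (triangle (r, s, p)) with s := o![a,a,a,d,d,d]
  have hrs : E (o ![a, a, a, c, c, d]) (o ![a, a, a, d, d, d]) :=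
    poly6 hpoly (hrefl a) (hrefl a) (hrefl a) hcd hcd (hrefl d)
  have hsr : E (o ![a, a, a, d, d, d]) (o ![a, a, a, c, c, d]) :=
    poly6 hpoly (hrefl a) (hrefl a) (hrefl a) hdc hdc (hrefl d)
  have hsp : E (o ![a, a, a, d, d, d]) (o ![a, a, a, b, b, c]) := by
    have h := poly6 hpoly (hrefl a) hda hda hab hab hdc
    rwa [esad] at h
  have hpr : E (o ![a, a, a, b, b, c]) (o ![a, a, a, c, c, d]) :=
    poly6 hpoly (hrefl a) (hrefl a) (hrefl a) hbc hbc hcd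
  have step3 : HEqv DEdge E (o ![a, a, a, b, b, c]) (o ![a, a, a, c, c, d]) :=
    Relation.EqvGen.symm _ _ (tri02 hrefl hrs hsr hsp hpr)
  -- step 4 : r ~ u := o![a,d,a,c,c,c]   (triangle (r, t, u)) with t := o![b,b,b,d,d,d]
  have hrt : E (o ![a, a, a, c, c, d]) (o ![b, b, b, d, d, d]) :=
    poly6 hpoly hab hab hab hcd hcd (hrefl d)
  have htr : E (o ![b, b, b, d, d, d]) (o ![a, a, a, c, c, d]) :=
    poly6 hpoly hba hba hba hdc hdc (hrefl d)
  have htu : E (o ![b, b, b, d, d, d]) (o ![a, d, a, c, c, c]) := by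
    have h := poly6 hpoly hba (hrefl d) hda hbc hbc hdc
    rwa [etbd] at h
  have hur : E (o ![a, d, a, c, c, c]) (o ![a, a, a, c, c, d]) :=
    poly6 hpoly (hrefl a) hda (hrefl a) (hrefl c) (hrefl c) hcd
  have step4 : HEqv DEdge E (o ![a, a, a, c, c, d]) (o ![a, d, a, c, c, c]) :=
    tri02 hrefl hrt htr htu hur
  -- step 5 : u ~ w := o![c,d,c,d,c,d]   (triangle (u, v, w)) with v := o![b,c,b,c,c,c]
  have huv : E (o ![a, d, a, c, c, c]) (o ![b, c, b, c, c, c]) :=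
    poly6 hpoly hab hdc hab (hrefl c) (hrefl c) (hrefl c)
  have hvu : E (o ![b, c, b, c, c, c]) (o ![a, d, a, c, c, c]) :=
    poly6 hpoly hba hcd hba (hrefl c) (hrefl c) (hrefl c)
  have hvw : E (o ![b, c, b, c, c, c]) (o ![c, d, c, d, c, d]) :=
    poly6 hpoly hbc hcd hbc hcd (hrefl c) hcd
  have hwu : E (o ![c, d, c, d, c, d]) (o ![a, d, a, c, c, c]) := by
    have h := poly6 hpoly hda (hrefl d) hda (hrefl c) (hrefl c) (hrefl c)
    rwa [ewdc] at h
  have step5 : HEqv DEdge E (o ![a, d, a, c, c, c]) (o ![c, d, c, d, c, d]) :=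
    tri02 hrefl huv hvu hvw hwu
  -- step 6 : w ~ c   (triangle (w, c, c))
  have hwc : E (o ![c, d, c, d, c, d]) c := by
    have h := poly6 hpoly (hrefl c) hdc (hrefl c) hdc (hrefl c) hdc
    rwa [oconst hidem c] at h
  have hcw : E c (o ![c, d, c, d, c, d]) := by
    have h := poly6 hpoly (hrefl c) hcd (hrefl c) hcd (hrefl c) hcd
    rwa [oconst hidem c] at h
  have step6 : HEqv DEdge E (o ![c, d, c, d, c, d]) c :=
    tri02 hrefl hwc hcw (hrefl c) hcw
  exact (((((step1.trans _ _ _ step2).trans _ _ _ step3).trans _ _ _ step4).trans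
    _ _ _ step5).trans _ _ _ step6)

end DigraphHM7
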